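/- arXiv:1210.0585 — 2 statements merged into one kernel-verified Lean document; each statement's English description precedes it below -/
import Mathlib

section
/- Let λ > 0, a > 0, and define h(ε) = (2π/√3) · (1 + (λ²/2)·ρ(ε)²) / sqrt(λ² + 8aε²) with ρ(ε)² = -λ/(2a) + sqrt(λ² + 8aε²)/(2a). Then the second derivative of h at ε = 0 equals 2·(2π/√3)·(1 - 4a/λ³). -/
open Real

theorem h_second_deriv (lam a : ℝ) (hlam : 0 < lam) (ha : 0 < a) :
    deriv (deriv
      (fun ε : ℝ =>
        (2 * π / Real.sqrt 3) *
          (1 + (lam ^ 2 / 2) *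
            (-lam / (2 * a) + Real.sqrt (lam ^ 2 + 8 * a * ε ^ 2) / (2 * a))) /
          Real.sqrt (lam ^ 2 + 8 * a * ε ^ 2))) 0
      = 2 * (2 * π / Real.sqrt 3) * (1 - 4 * a / lam ^ 3) := by
  set C := 2 * π / Real.sqrt 3 with hCdef
  clear_value C
  have hfpos : ∀ ε : ℝ, 0 < lam ^ 2 + 8 * a * ε ^ 2 := by
    intro ε; positivity
  have hspos : ∀ ε : ℝ, 0 < Real.sqrt (lam ^ 2 + 8 * a * ε ^ 2) :=
    fun ε => Real.sqrt_pos.2 (hfpos ε)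
  have hfun : (fun ε : ℝ =>
      C * (1 + (lam ^ 2 / 2) *
        (-lam / (2 * a) + Real.sqrt (lam ^ 2 + 8 * a * ε ^ 2) / (2 * a))) /
        Real.sqrt (lam ^ 2 + 8 * a * ε ^ 2))
      = fun ε : ℝ => C * lam ^ 2 / (4 * a) +
          (C * (1 - lam ^ 3 / (4 * a))) * (Real.sqrt (lam ^ 2 + 8 * a * ε ^ 2))⁻¹ := by
    funext ε
    have hs := (hspos ε).ne'
    field_simp
    ring
  rw [hfun]
  set K := C * (1 - lam ^ 3 / (4 * a)) with hK
  clear_value K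
  have hu : ∀ ε : ℝ, HasDerivAt (fun ε : ℝ => Real.sqrt (lam ^ 2 + 8 * a * ε ^ 2))
      (8 * a * ε / Real.sqrt (lam ^ 2 + 8 * a * ε ^ 2)) ε := by
    intro ε
    have hb : HasDerivAt (fun ε : ℝ => lam ^ 2 + 8 * a * ε ^ 2) (16 * a * ε) ε := by
      have := ((hasDerivAt_pow 2 ε).const_mul (8 * a)).const_add (lam ^ 2)
      exact this.congr_deriv (by push_cast; ring)
    have h2 := hb.sqrt (hfpos ε).ne'
    convert h2 using 1
    have hs := (hspos ε).ne'
    field_simp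
    ring
  have hderiv1 : deriv (fun ε : ℝ => C * lam ^ 2 / (4 * a) +
      K * (Real.sqrt (lam ^ 2 + 8 * a * ε ^ 2))⁻¹)
      = fun ε : ℝ => K * (-(8 * a * ε / Real.sqrt (lam ^ 2 + 8 * a * ε ^ 2)) /
          Real.sqrt (lam ^ 2 + 8 * a * ε ^ 2) ^ 2) := by
    funext ε
    exact ((((hu ε).inv (hspos ε).ne').const_mul K).const_add _).deriv
  rw [hderiv1]
  have hfun2 : (fun ε : ℝ => K * (-(8 * a * ε / Real.sqrt (lam ^ 2 + 8 * a * ε ^ 2)) /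
      Real.sqrt (lam ^ 2 + 8 * a * ε ^ 2) ^ 2))
      = fun ε : ℝ => ε * ((-8 * a * K) * (Real.sqrt (lam ^ 2 + 8 * a * ε ^ 2) ^ 3)⁻¹) := by
    funext ε
    have hs := (hspos ε).ne'
    have h2 : Real.sqrt (lam ^ 2 + 8 * a * ε ^ 2) ^ 2 = lam ^ 2 + 8 * a * ε ^ 2 :=
      Real.sq_sqrt (hfpos ε).le
    have h3 : Real.sqrt (lam ^ 2 + 8 * a * ε ^ 2) ^ 3 =
        (lam ^ 2 + 8 * a * ε ^ 2) * Real.sqrt (lam ^ 2 + 8 * a * ε ^ 2) := by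
      rw [pow_succ, h2]
    rw [h3]
    field_simp
    rw [Real.sq_sqrt (by positivity)]
  rw [hfun2]
  have hv := ((((hu 0).pow 3).inv (pow_ne_zero 3 (hspos 0).ne')).const_mul (-8 * a * K))
  have hd : HasDerivAt (fun ε : ℝ => ε * ((-8 * a * K) * (Real.sqrt (lam ^ 2 + 8 * a * ε ^ 2) ^ 3)⁻¹)) _ 0 :=
    (hasDerivAt_id' (x := (0:ℝ))).mul hv
  rw [hd.deriv]
  have h0 : Real.sqrt (lam ^ 2 + 8 * a * (0:ℝ) ^ 2) = lam := by
    rw [show lam ^ 2 + 8 * a * (0:ℝ) ^ 2 = lam ^ 2 by ring, Real.sqrt_sq hlam.le]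
  rw [h0]
  have hlam' := hlam.ne'
  have ha' := ha.ne'
  rw [hK, hCdef]
  field_simp
  ring
end

section
/- Let λ > 0, a > 0, and let κ(y) = (λ + 12ay²)/(1 + (λy + 4ay³)²)^{3/2}. Then the function F₀(y) = (2π/√3)·(1/κ(y/3)) satisfies F₀'(0) = 0 and F₀''(0) = (2π/√3)·(λ/3 − 8a/(3λ²)). In particular F₀''(0) < 0 if and only if a > λ³/8. -/
open Real

theorem boundary_function_derivs (lam a : ℝ) (hlam : 0 < lam) (ha : 0 < a) :
    deriv
        (fun y : ℝ => (2 * π / Real.sqrt 3) *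
          (1 / ((lam + 12 * a * (y / 3) ^ 2) /
            (1 + (lam * (y / 3) + 4 * a * (y / 3) ^ 3) ^ 2) ^ ((3 : ℝ) / 2)))) 0 = 0 ∧
    deriv (deriv
        (fun y : ℝ => (2 * π / Real.sqrt 3) *
          (1 / ((lam + 12 * a * (y / 3) ^ 2) /
            (1 + (lam * (y / 3) + 4 * a * (y / 3) ^ 3) ^ 2) ^ ((3 : ℝ) / 2))))) 0
      = (2 * π / Real.sqrt 3) * (lam / 3 - 8 * a / (3 * lam ^ 2)) ∧
    (deriv (deriv
        (fun y : ℝ => (2 * π / Real.sqrt 3) *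
          (1 / ((lam + 12 * a * (y / 3) ^ 2) /
            (1 + (lam * (y / 3) + 4 * a * (y / 3) ^ 3) ^ 2) ^ ((3 : ℝ) / 2))))) 0 < 0
      ↔ a > lam ^ 3 / 8) := by
  have hl0 : lam ≠ 0 := hlam.ne'
  set C := 2 * π / Real.sqrt 3 with hC
  have hCpos : 0 < C := by
    rw [hC]
    have h3 : (0:ℝ) < Real.sqrt 3 := Real.sqrt_pos.mpr (by norm_num)
    positivity
  set u : ℝ → ℝ := fun y => lam * (y / 3) + 4 * a * (y / 3) ^ 3 with hu_def
  set v : ℝ → ℝ := fun y => lam / 3 + 4 * a * (y / 3) ^ 2 with hv_def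
  set D : ℝ → ℝ := fun y => lam + 12 * a * (y / 3) ^ 2 with hD_def
  set w : ℝ → ℝ := fun y => 8 * a * y / 3 with hw_def
  set B : ℝ → ℝ := fun y => 1 + u y ^ 2 with hB_def
  have hDpos : ∀ x : ℝ, 0 < D x := by intro x; rw [hD_def]; positivity
  have hBpos : ∀ x : ℝ, 0 < B x := by intro x; rw [hB_def]; positivity
  have h3' : ∀ x : ℝ, HasDerivAt (fun y : ℝ => y / 3) (1/3) x :=
    fun x => (hasDerivAt_id x).div_const 3
  have hu' : ∀ x : ℝ, HasDerivAt u (v x) x := by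
    intro x
    rw [hu_def, hv_def]
    have h1 : HasDerivAt (fun y : ℝ => lam * (y/3)) (lam * (1/3)) x := (h3' x).const_mul lam
    have h2 := ((h3' x).pow 3).const_mul (4*a)
    refine (h1.add h2).congr_deriv ?_
    push_cast
    ring
  have hD' : ∀ x : ℝ, HasDerivAt D (w x) x := by
    intro x
    rw [hD_def, hw_def]
    have h2 := ((h3' x).pow 2).const_mul (12*a)
    refine ((hasDerivAt_const x lam).add h2).congr_deriv ?_
    push_cast
    ring
  have hB' : ∀ x : ℝ, HasDerivAt B (2 * u x * v x) x := by
    intro x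
    rw [hB_def]
    have h2 := (hu' x).pow 2
    refine ((hasDerivAt_const x (1:ℝ)).add h2).congr_deriv ?_
    push_cast
    ring
  -- the first derivative function
  set G : ℝ → ℝ := fun x => C * ((2 * u x * v x * (3/2) * B x ^ ((3:ℝ)/2 - 1) * D x
      - B x ^ ((3:ℝ)/2) * w x) / D x ^ 2) with hG_def
  have hkey : ∀ x : ℝ, HasDerivAt (fun y => C * (B y ^ ((3:ℝ)/2) / D y)) (G x) x := by
    intro x
    have hN : HasDerivAt (fun y => B y ^ ((3:ℝ)/2))
        (2 * u x * v x * (3/2) * B x ^ ((3:ℝ)/2 - 1)) x :=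
      (hB' x).rpow_const (Or.inr (by norm_num))
    have hq := (hN.div (hD' x) (hDpos x).ne').const_mul C
    rw [hG_def]
    exact hq
  have hfeq : (fun y : ℝ => (2 * π / Real.sqrt 3) *
          (1 / ((lam + 12 * a * (y / 3) ^ 2) /
            (1 + (lam * (y / 3) + 4 * a * (y / 3) ^ 3) ^ 2) ^ ((3 : ℝ) / 2))))
      = fun y => C * (B y ^ ((3:ℝ)/2) / D y) := by
    funext y
    rw [hC, hB_def, hD_def, hu_def]
    rw [one_div_div]
  rw [hfeq]
  have hd1 : deriv (fun y => C * (B y ^ ((3:ℝ)/2) / D y)) = G :=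
    funext fun x => (hkey x).deriv
  rw [hd1]
  -- values at 0
  have hu0 : u 0 = 0 := by rw [hu_def]; norm_num
  have hv0 : v 0 = lam / 3 := by rw [hv_def]; norm_num
  have hD0 : D 0 = lam := by rw [hD_def]; norm_num
  have hw0 : w 0 = 0 := by rw [hw_def]; norm_num
  have hB0 : B 0 = 1 := by simp [hB_def, hu0]
  have hG0 : G 0 = 0 := by
    rw [hG_def]
    simp only [hu0, hw0]
    ring
  -- derivative facts at 0
  have hu0' : HasDerivAt u (lam / 3) 0 := by rw [← hv0]; exact hu' 0
  have hv0' : HasDerivAt v 0 0 := by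
    rw [hv_def]
    have h2 := ((h3' 0).pow 2).const_mul (4*a)
    refine ((hasDerivAt_const (0:ℝ) (lam/3)).add h2).congr_deriv ?_
    norm_num
  have hw0' : HasDerivAt w (8 * a / 3) 0 := by
    rw [hw_def]
    have := ((hasDerivAt_id (0:ℝ)).const_mul (8*a)).div_const 3
    refine this.congr_deriv ?_
    ring
  have hB0' : HasDerivAt B 0 0 := by
    have := hB' 0
    rwa [hu0, mul_zero, zero_mul] at this
  have hD0' : HasDerivAt D 0 0 := by
    have := hD' 0
    rwa [hw0] at this
  have hB0ne : B 0 ≠ 0 := by rw [hB0]; norm_num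
  have hp1 : HasDerivAt (fun y => B y ^ ((3:ℝ)/2 - 1)) 0 0 := by
    have := hB0'.rpow_const (p := (3:ℝ)/2 - 1) (Or.inl hB0ne)
    simpa using this
  have hp2 : HasDerivAt (fun y => B y ^ ((3:ℝ)/2)) 0 0 := by
    have := hB0'.rpow_const (p := (3:ℝ)/2) (Or.inr (by norm_num))
    simpa using this
  -- second derivative at 0
  have HG : HasDerivAt G (C * (lam / 3 - 8 * a / (3 * lam ^ 2))) 0 := by
    have Hnum := ((((hu0'.const_mul 2).mul hv0').mul_const ((3:ℝ)/2)).mul hp1).mul hD0'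
    have Hsub := Hnum.sub (hp2.mul hw0')
    have Hdiv := Hsub.div (hD0'.pow 2) (by
      simp only [Pi.pow_apply, hD0]
      positivity)
    have Hbig := Hdiv.const_mul C
    rw [hG_def]
    refine Hbig.congr_deriv ?_
    simp only [Pi.pow_apply, Pi.mul_apply, Pi.sub_apply, hu0, hv0, hD0, hw0, hB0]
    push_cast
    rw [Real.one_rpow, Real.one_rpow]
    field_simp
    ring
  refine ⟨hG0, ?_, ?_⟩
  · rw [HG.deriv]
  · rw [HG.deriv]
    constructor
    · intro h
      have hx : lam / 3 - 8 * a / (3 * lam ^ 2) < 0 := by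
        by_contra hc
        push_neg at hc
        nlinarith [mul_nonneg hCpos.le hc]
      rw [sub_neg, div_lt_div_iff₀ (by norm_num) (by positivity)] at hx
      rw [gt_iff_lt, div_lt_iff₀ (by norm_num : (0:ℝ) < 8)]
      nlinarith
    · intro h
      have hx : lam / 3 - 8 * a / (3 * lam ^ 2) < 0 := by
        rw [sub_neg, div_lt_div_iff₀ (by norm_num) (by positivity)]
        rw [gt_iff_lt, div_lt_iff₀ (by norm_num : (0:ℝ) < 8)] at h
        nlinarith
      exact mul_neg_of_pos_of_neg hCpos hx
end
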